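/- Let m be a positive invariant probability distribution of p and let q⁻ satisfy the backward committor system. Then Σ_{x∈A} Σ_{y∈V} m(y)(1 − q⁻(y)) p(x|y) = Σ_{x∈B} Σ_{y∈V} m(y) q⁻(y) p(x|y). -/

import Mathlib

open Classical

/-- Let `m` be a positive invariant probability distribution of `p` and
let `q⁻` satisfy the backward committor system (for the time-reversed matrix
`p⁻(y|x) = m(y) p(x|y) / m(x)`).  Then
`Σ_{x∈A} Σ_{y∈V} m(y)(1 − q⁻(y)) p(x|y) = Σ_{x∈B} Σ_{y∈V} m(y) q⁻(y) p(x|y)`.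
(Here `p y x` is the probability `p(x|y)` of jumping from `y` to `x`.) -/
theorem Z_forward_backward_balance {V : Type*} [Fintype V] [DecidableEq V]
    (p : V → V → ℝ) (A B : Finset V)
    (hAB : Disjoint A B) (hA : A.Nonempty) (hB : B.Nonempty)
    (hp0 : ∀ x y, 0 ≤ p x y) (hp1 : ∀ x, ∑ y, p x y = 1)
    (m : V → ℝ) (hm0 : ∀ x, 0 < m x) (hm1 : ∑ x, m x = 1)
    (hminv : ∀ x, ∑ y, m y * p y x = m x)
    (qm : V → ℝ)
    (hqm0 : ∀ x, 0 ≤ qm x) (hqm1 : ∀ x, qm x ≤ 1)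
    (hqmA : ∀ x ∈ A, qm x = 1) (hqmB : ∀ x ∈ B, qm x = 0)
    (hqmE : ∀ x, x ∉ A ∪ B → qm x = ∑ y, (m y * p y x / m x) * qm y) :
    ∑ x ∈ A, ∑ y, m y * (1 - qm y) * p y x = ∑ x ∈ B, ∑ y, m y * qm y * p y x := by
  set S : V → ℝ := fun x => ∑ y, m y * qm y * p y x with hS
  have h1 : ∑ x, S x = ∑ y, m y * qm y := by
    calc ∑ x, ∑ y, m y * qm y * p y x = ∑ y, ∑ x, m y * qm y * p y x :=
          Finset.sum_comm
      _ = ∑ y, m y * qm y * ∑ x, p y x := by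
          refine Finset.sum_congr rfl fun y _ => ?_
          rw [Finset.mul_sum]
      _ = ∑ y, m y * qm y := by simp [hp1]
  have htot : ∑ x, (S x - m x * qm x) = 0 := by
    rw [Finset.sum_sub_distrib, h1, sub_self]
  have hout : ∀ x ∉ A ∪ B, S x - m x * qm x = 0 := by
    intro x hx
    have hmne : m x ≠ 0 := (hm0 x).ne'
    have hq : qm x = S x / m x := by
      rw [hqmE x hx, Finset.sum_div]
      refine Finset.sum_congr rfl fun y _ => ?_
      field_simp
    rw [hq]
    field_simp
    ring
  have hsplit : ∑ x ∈ A ∪ B, (S x - m x * qm x) = 0 := by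
    rw [← htot]
    exact Finset.sum_subset (Finset.subset_univ _) (fun x _ hx => hout x hx)
  rw [Finset.sum_union hAB] at hsplit
  have hAterm : ∑ x ∈ A, (S x - m x * qm x) = ∑ x ∈ A, S x - ∑ x ∈ A, m x := by
    rw [Finset.sum_sub_distrib]
    congr 1
    exact Finset.sum_congr rfl fun x hx => by rw [hqmA x hx, mul_one]
  have hBterm : ∑ x ∈ B, (S x - m x * qm x) = ∑ x ∈ B, S x := by
    refine Finset.sum_congr rfl fun x hx => by rw [hqmB x hx, mul_zero, sub_zero]
  rw [hAterm, hBterm] at hsplit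
  have hLHS : ∑ x ∈ A, ∑ y, m y * (1 - qm y) * p y x = ∑ x ∈ A, (m x - S x) := by
    refine Finset.sum_congr rfl fun x _ => ?_
    have : ∀ y, m y * (1 - qm y) * p y x = m y * p y x - m y * qm y * p y x :=
      fun y => by ring
    simp_rw [this]
    rw [Finset.sum_sub_distrib, hminv x]
  rw [hLHS, Finset.sum_sub_distrib]
  linarith
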